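/- For the inverted Hüsler–Reiss model with Q(x,y) = exp(-ℓ(-log x, -log y)) where ℓ(x,y) = x Φ(λ + (log x - log y)/(2λ)) + y Φ(λ + (log y - log x)/(2λ)) and θ = Φ(λ) ∈ (1/2, 1], one has lim_{p→0} p^{-2θ} Q(px, py) = (xy)^θ for all x, y > 0; hence the coefficient of tail dependence is η = 1/(2θ) and c(x,y) = (xy)^θ. -/

import Mathlib

open Filter Topology Set

noncomputable def stdNormalCDF (t : ℝ) : ℝ :=
  ∫ x in Set.Iic t, (Real.sqrt (2 * Real.pi))⁻¹ * Real.exp (-(x ^ 2) / 2)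

lemma stdNormalPDF_integrable :
    MeasureTheory.Integrable (fun x : ℝ =>
      (Real.sqrt (2 * Real.pi))⁻¹ * Real.exp (-(x ^ 2) / 2)) := by
  have h := (integrable_exp_neg_mul_sq (b := (2⁻¹:ℝ)) (by norm_num)).const_mul
    (Real.sqrt (2 * Real.pi))⁻¹
  convert h using 2 with x
  ring_nf

lemma stdNormalCDF_hasDerivAt (t : ℝ) :
    HasDerivAt stdNormalCDF ((Real.sqrt (2 * Real.pi))⁻¹ * Real.exp (-(t ^ 2) / 2)) t := by
  set φ : ℝ → ℝ := fun x => (Real.sqrt (2 * Real.pi))⁻¹ * Real.exp (-(x ^ 2) / 2) with hφ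
  have hcont : Continuous φ := by
    apply Continuous.mul continuous_const
    exact Real.continuous_exp.comp (by continuity)
  have hint : MeasureTheory.Integrable φ := stdNormalPDF_integrable
  have key : ∀ s : ℝ, stdNormalCDF s = stdNormalCDF 0 + ∫ u in (0:ℝ)..s, φ u := by
    intro s
    have := intervalIntegral.integral_Iic_sub_Iic (f := φ) (a := (0:ℝ)) (b := s)
      hint.integrableOn hint.integrableOn
    unfold stdNormalCDF
    linarith [this]
  have hd : HasDerivAt (fun s => stdNormalCDF 0 + ∫ u in (0:ℝ)..s, φ u) (φ t) t := by
    simpa using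
      (intervalIntegral.integral_hasDerivAt_right (hcont.intervalIntegrable 0 t)
        (hcont.stronglyMeasurableAtFilter _ _) hcont.continuousAt)
  exact hd.congr_of_eventuallyEq (Filter.Eventually.of_forall fun s => key s)

theorem inverted_husler_reiss_tail_limit (lam : ℝ) (hlam : 0 < lam)
    (θ : ℝ) (hθ : θ = stdNormalCDF lam) (hθ' : θ ∈ Set.Ioc ((1:ℝ)/2) 1)
    (ℓ : ℝ → ℝ → ℝ)
    (hℓ : ℓ = fun x y =>
      x * stdNormalCDF (lam + (Real.log x - Real.log y) / (2 * lam)) +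
      y * stdNormalCDF (lam + (Real.log y - Real.log x) / (2 * lam)))
    (Q : ℝ → ℝ → ℝ)
    (hQ : Q = fun x y => Real.exp (-(ℓ (-Real.log x) (-Real.log y)))) :
    ∀ x : ℝ, 0 < x → ∀ y : ℝ, 0 < y →
      Tendsto (fun p : ℝ => p ^ (-(2 * θ)) * Q (p * x) (p * y)) (𝓝[>] 0)
        (𝓝 ((x * y) ^ θ)) := by
  intro x hx y hy
  have hPhi := stdNormalCDF_hasDerivAt lam
  -- abbreviations
  set A : ℝ → ℝ := fun p => -Real.log p - Real.log x with hA
  set B : ℝ → ℝ := fun p => -Real.log p - Real.log y with hB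
  set ε : ℝ → ℝ := fun p => (Real.log (A p) - Real.log (B p)) / (2 * lam) with hεdef
  set c : ℝ := Real.log y - Real.log x with hc
  have hAB : ∀ p, A p = B p + c := by intro p; simp only [hA, hB, hc]; ring
  have hneglog : Tendsto (fun p : ℝ => -Real.log p) (𝓝[>] (0:ℝ)) atTop :=
    tendsto_neg_atBot_atTop.comp Real.tendsto_log_nhdsGT_zero
  have hAtop : Tendsto A (𝓝[>] (0:ℝ)) atTop :=
    tendsto_atTop_add_const_right _ (-Real.log x) hneglog
  have hBtop : Tendsto B (𝓝[>] (0:ℝ)) atTop :=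
    tendsto_atTop_add_const_right _ (-Real.log y) hneglog
  have hApos : ∀ᶠ p in 𝓝[>] (0:ℝ), 0 < A p := hAtop.eventually (eventually_gt_atTop 0)
  have hBpos : ∀ᶠ p in 𝓝[>] (0:ℝ), 0 < B p := hBtop.eventually (eventually_gt_atTop 0)
  -- ratio tends to 1
  have hratio : Tendsto (fun p => A p / B p) (𝓝[>] (0:ℝ)) (𝓝 1) := by
    have h0 : Tendsto (fun p => c / B p) (𝓝[>] (0:ℝ)) (𝓝 0) :=
      tendsto_const_nhds.div_atTop hBtop
    have : Tendsto (fun p => 1 + c / B p) (𝓝[>] (0:ℝ)) (𝓝 (1 + 0)) :=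
      tendsto_const_nhds.add h0
    rw [add_zero] at this
    refine this.congr' ?_
    filter_upwards [hBpos] with p hBp
    rw [hAB p]
    field_simp
  -- ε tends to 0
  have hε : Tendsto ε (𝓝[>] (0:ℝ)) (𝓝 0) := by
    have hlog : Tendsto (fun p => Real.log (A p / B p)) (𝓝[>] (0:ℝ)) (𝓝 0) := by
      have := (Real.continuousAt_log (one_ne_zero)).tendsto.comp hratio
      simpa [Function.comp_def] using this
    have : Tendsto (fun p => Real.log (A p / B p) / (2 * lam)) (𝓝[>] (0:ℝ)) (𝓝 (0 / (2*lam))) :=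
      hlog.div_const _
    rw [zero_div] at this
    refine this.congr' ?_
    filter_upwards [hApos, hBpos] with p hAp hBp
    rw [hεdef]
    rw [Real.log_div hAp.ne' hBp.ne']
  -- A * ε converges
  have hAε : Tendsto (fun p => A p * ε p) (𝓝[>] (0:ℝ)) (𝓝 (1 * c / (2 * lam))) := by
    have h1 : Tendsto (fun p => B p * Real.log (1 + c / B p)) (𝓝[>] (0:ℝ)) (𝓝 c) :=
      (Real.tendsto_mul_log_one_add_div_atTop c).comp hBtop
    have h2 : Tendsto (fun p => (A p / B p) * (B p * Real.log (1 + c / B p)))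
        (𝓝[>] (0:ℝ)) (𝓝 (1 * c)) := hratio.mul h1
    have h3 := h2.div_const (2 * lam)
    refine h3.congr' ?_
    filter_upwards [hApos, hBpos] with p hAp hBp
    have hBne : B p ≠ 0 := hBp.ne'
    have h1c : 1 + c / B p = A p / B p := by rw [hAB p]; field_simp
    rw [h1c, hεdef]
    rw [Real.log_div hAp.ne' hBp.ne']
    field_simp
  -- the slope-type function g
  set g : ℝ → ℝ := fun t => if t = 0 then 0 else
    (stdNormalCDF (lam + t) + stdNormalCDF (lam - t) - 2 * θ) / t with hg
  have hgt : Tendsto g (𝓝 (0:ℝ)) (𝓝 0) := by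
    set H : ℝ → ℝ := fun t => stdNormalCDF (lam + t) + stdNormalCDF (lam - t) - 2 * θ with hH
    have hd1 : HasDerivAt (fun t : ℝ => stdNormalCDF (lam + t))
        ((Real.sqrt (2 * Real.pi))⁻¹ * Real.exp (-(lam ^ 2) / 2) * 1) 0 := by
      have hinner : HasDerivAt (fun t : ℝ => lam + t) 1 0 := by
        simpa using (hasDerivAt_id (0:ℝ)).const_add lam
      have := HasDerivAt.comp (0:ℝ) (by simpa using hPhi) hinner
      simpa [Function.comp_def] using this
    have hd2 : HasDerivAt (fun t : ℝ => stdNormalCDF (lam - t))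
        ((Real.sqrt (2 * Real.pi))⁻¹ * Real.exp (-(lam ^ 2) / 2) * (-1)) 0 := by
      have hinner : HasDerivAt (fun t : ℝ => lam - t) (-1) 0 := by
        simpa using (hasDerivAt_id (0:ℝ)).const_sub lam
      have := HasDerivAt.comp (0:ℝ) (by simpa using hPhi) hinner
      simpa [Function.comp_def] using this
    have hdH : HasDerivAt H 0 0 := by
      have := (hd1.add hd2).sub_const (2 * θ)
      refine this.congr_deriv ?_
      ring
    have hH0 : H 0 = 0 := by simp [hH, hθ]; ring
    have hslope : Tendsto (slope H 0) (𝓝[≠] (0:ℝ)) (𝓝 0) :=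
      hasDerivAt_iff_tendsto_slope.mp hdH
    have h1 : Tendsto g (𝓝[≠] (0:ℝ)) (𝓝 0) := by
      refine hslope.congr' ?_
      filter_upwards [eventually_mem_nhdsWithin] with t ht
      have ht0 : t ≠ 0 := ht
      simp [slope, hg, ht0, hH0, div_eq_inv_mul]
      rfl
    have h2 : Tendsto g (pure (0:ℝ)) (𝓝 0) := by
      have : g 0 = 0 := by simp [hg]
      rw [tendsto_pure_left]
      intro s hs
      simpa [this] using mem_of_mem_nhds hs
    have := tendsto_sup.mpr ⟨h1, h2⟩
    rwa [nhdsNE_sup_pure] at this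
  -- the remainder R tends to 0
  set R : ℝ → ℝ := fun p => A p * ε p * g (ε p) + (B p - A p) * (stdNormalCDF (lam - ε p) - θ)
    with hR
  have hRt : Tendsto R (𝓝[>] (0:ℝ)) (𝓝 0) := by
    have h1 : Tendsto (fun p => A p * ε p * g (ε p)) (𝓝[>] (0:ℝ)) (𝓝 (1 * c / (2*lam) * 0)) :=
      hAε.mul (hgt.comp hε)
    rw [mul_zero] at h1
    have hΦcont : ContinuousAt stdNormalCDF lam := hPhi.continuousAt
    have h2a : Tendsto (fun p => lam - ε p) (𝓝[>] (0:ℝ)) (𝓝 lam) := by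
      have := tendsto_const_nhds.sub hε (f := fun _ : ℝ => lam)
      simpa using this
    have h2b : Tendsto (fun p => stdNormalCDF (lam - ε p) - θ) (𝓝[>] (0:ℝ)) (𝓝 0) := by
      have := (hΦcont.tendsto.comp h2a).sub (tendsto_const_nhds (x := θ))
      rw [hθ] at this ⊢
      simpa using this
    have h2 : Tendsto (fun p => (B p - A p) * (stdNormalCDF (lam - ε p) - θ))
        (𝓝[>] (0:ℝ)) (𝓝 ((-c) * 0)) := by
      have hBA : ∀ p, B p - A p = -c := by intro p; rw [hAB p]; ring
      refine (tendsto_const_nhds.mul h2b).congr fun p => ?_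
      rw [hBA p]
    rw [mul_zero] at h2
    have := h1.add h2
    rw [add_zero] at this
    exact this
  -- eventual identity
  have hxypos : (0:ℝ) < x * y := mul_pos hx hy
  have hid : ∀ᶠ p in 𝓝[>] (0:ℝ),
      p ^ (-(2 * θ)) * Q (p * x) (p * y) = Real.exp (θ * Real.log (x * y) - R p) := by
    filter_upwards [self_mem_nhdsWithin, hApos, hBpos] with p hp hAp hBp
    have hp0 : (0:ℝ) < p := hp
    have hlogpx : -Real.log (p * x) = A p := by
      rw [Real.log_mul hp0.ne' hx.ne']; simp [hA]; ring
    have hlogpy : -Real.log (p * y) = B p := by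
      rw [Real.log_mul hp0.ne' hy.ne']; simp [hB]; ring
    have hℓval : ℓ (-Real.log (p * x)) (-Real.log (p * y)) =
        A p * stdNormalCDF (lam + ε p) + B p * stdNormalCDF (lam - ε p) := by
      have harg1 : lam + (Real.log (A p) - Real.log (B p)) / (2 * lam) = lam + ε p := by
        rw [hεdef]
      have harg2 : lam + (Real.log (B p) - Real.log (A p)) / (2 * lam) = lam - ε p := by
        rw [hεdef]; ring
      rw [hlogpx, hlogpy, hℓ]
      simp only
      rw [harg1, harg2]
    have hrpow : p ^ (-(2 * θ)) = Real.exp (Real.log p * (-(2 * θ))) :=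
      Real.rpow_def_of_pos hp0 _
    have hQval : Q (p * x) (p * y) = Real.exp (-(A p * stdNormalCDF (lam + ε p) +
        B p * stdNormalCDF (lam - ε p))) := by
      rw [hQ]; simp only; rw [hℓval]
    rw [hrpow, hQval, ← Real.exp_add]
    congr 1
    -- key pointwise identity
    have hkey : A p * ε p * g (ε p) =
        A p * (stdNormalCDF (lam + ε p) + stdNormalCDF (lam - ε p) - 2 * θ) := by
      by_cases h : ε p = 0
      · rw [h]
        have hg0 : g 0 = 0 := by simp [hg]
        rw [hg0, hθ, add_zero, sub_zero]
        ring
      · simp only [hg, if_neg h]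
        field_simp
    have hRval : R p = A p * stdNormalCDF (lam + ε p) + B p * stdNormalCDF (lam - ε p)
        - θ * (A p + B p) := by
      rw [hR]; simp only; rw [hkey]; ring
    have hAB2 : A p + B p = -2 * Real.log p - Real.log (x * y) := by
      rw [Real.log_mul hx.ne' hy.ne']; simp [hA, hB]; ring
    rw [hRval, hAB2]
    ring
  -- conclude
  have hfinal : Tendsto (fun p => Real.exp (θ * Real.log (x * y) - R p)) (𝓝[>] (0:ℝ))
      (𝓝 (Real.exp (θ * Real.log (x * y) - 0))) :=
    Real.continuous_exp.continuousAt.tendsto.comp (tendsto_const_nhds.sub hRt)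
  rw [sub_zero] at hfinal
  have hval : Real.exp (θ * Real.log (x * y)) = (x * y) ^ θ := by
    rw [Real.rpow_def_of_pos hxypos, mul_comm]
  rw [hval] at hfinal
  exact hfinal.congr' (hid.mono fun p hp => hp.symm)
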